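/- Let q = 2^n for a positive integer n and let d = q^3 + q^2 + q - 1. Then gcd(d, q^4 - 1) = 1. -/
import Mathlib


theorem gcd_d_q4_sub_one (n : ℕ) (hn : 0 < n) :
    Nat.gcd ((2^n)^3 + (2^n)^2 + 2^n - 1) ((2^n)^4 - 1) = 1 := by
  obtain ⟨m, hm⟩ : ∃ m, 2^n = m + 2 := by
    have h2 : 2 ≤ 2^n := by
      calc 2 = 2^1 := (pow_one 2).symm
      _ ≤ 2^n := Nat.pow_le_pow_right (by norm_num) hn
    exact ⟨2^n - 2, by omega⟩
  have hme : 2 ∣ m := by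
    have : 2 ∣ 2^n := dvd_pow_self 2 hn.ne'
    omega
  rw [hm]
  have e1 : (m+2)^3 + (m+2)^2 + (m+2) - 1 = m^3 + 7*m^2 + 17*m + 13 := by
    have : (m+2)^3 + (m+2)^2 + (m+2) = m^3 + 7*m^2 + 17*m + 14 := by ring
    omega
  have e2 : (m+2)^4 - 1 = m^4 + 8*m^3 + 24*m^2 + 32*m + 15 := by
    have : (m+2)^4 = m^4 + 8*m^3 + 24*m^2 + 32*m + 16 := by ring
    omega
  rw [e1, e2]
  set d := m^3 + 7*m^2 + 17*m + 13 with hd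
  set e := m^4 + 8*m^3 + 24*m^2 + 32*m + 15 with he
  set g := Nat.gcd d e with hg
  have hgd : g ∣ d := Nat.gcd_dvd_left _ _
  have hge : g ∣ e := Nat.gcd_dvd_right _ _
  -- g is odd
  have hm2 : 2 ∣ m^2 := hme.trans (dvd_pow_self m two_ne_zero)
  have hm3 : 2 ∣ m^3 := hme.trans (dvd_pow_self m three_ne_zero)
  have hgodd : ¬ 2 ∣ g := by
    intro h
    have hd2 : 2 ∣ d := h.trans hgd
    rw [hd] at hd2
    omega
  -- g ∣ 2*(m+1)
  have hkey : e = (m+1) * d + 2*(m+1) := by rw [hd, he]; ring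
  have hg2m : g ∣ 2*(m+1) := by
    have h1 := Nat.dvd_sub hge (hgd.mul_left (m+1))
    rwa [hkey, Nat.add_sub_cancel_left] at h1
  -- g coprime to 2, hence g ∣ m+1
  have hcop : Nat.Coprime 2 g :=
    (Nat.Prime.coprime_iff_not_dvd Nat.prime_two).mpr hgodd
  have hgm1 : g ∣ m + 1 := (Nat.Coprime.dvd_of_dvd_mul_left hcop.symm hg2m)
  -- then g ∣ 2
  have hdec : d = (m+1) * (m^2 + 6*m + 11) + 2 := by rw [hd]; ring
  have hg2 : g ∣ 2 := by
    have h1 := Nat.dvd_sub hgd (hgm1.mul_right (m^2 + 6*m + 11))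
    rwa [hdec, Nat.add_sub_cancel_left] at h1
  rcases (Nat.dvd_prime Nat.prime_two).mp hg2 with h | h
  · exact h
  · omega
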